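/- Let Θ ⊆ V be convex and centrosymmetric, L : V → ℝ and m : V → ℝⁿ linear, and suppose θ₀, θ₁ ∈ Θ both attain sup{L(θ) : ‖m(θ)‖ ≤ ε*, θ ∈ Θ} where ε* is the unique nonzero maximizer of ε ↦ ω(ε)Φ(−ε/σ) over [0, a*σ]. Then ‖m(θ₀)‖ = ‖m(θ₁)‖ = ε* and m(θ₀) = m(θ₁). -/
import Mathlib

/-- The density of the standard normal distribution. -/
noncomputable def stdGaussianPDF (x : ℝ) : ℝ :=
  (Real.sqrt (2 * Real.pi))⁻¹ * Real.exp (-(x ^ 2) / 2)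

/-- The cumulative distribution function of the standard normal distribution. -/
noncomputable def stdGaussianCDF (x : ℝ) : ℝ :=
  ∫ t in Set.Iic x, stdGaussianPDF t

/-- The modulus of continuity `ω(ε) = sup{L(θ) : ‖m(θ)‖ ≤ ε, θ ∈ Θ}`, as an
extended-real-valued function. -/
noncomputable def modulusE {V : Type*} [AddCommGroup V] [Module ℝ V] {n : ℕ}
    (L : V →ₗ[ℝ] ℝ) (m : V →ₗ[ℝ] EuclideanSpace ℝ (Fin n)) (Θ : Set V) (ε : ℝ) : EReal :=
  sSup ((fun θ => (L θ : EReal)) '' {θ ∈ Θ | ‖m θ‖ ≤ ε})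

open MeasureTheory

lemma stdGaussianPDF_eq : stdGaussianPDF = ProbabilityTheory.gaussianPDFReal 0 1 := by
  ext x
  simp [stdGaussianPDF, ProbabilityTheory.gaussianPDFReal, neg_div]

lemma stdGaussianPDF_pos (x : ℝ) : 0 < stdGaussianPDF x := by
  rw [stdGaussianPDF_eq]; exact ProbabilityTheory.gaussianPDFReal_pos 0 1 x one_ne_zero

lemma integrable_stdGaussianPDF : Integrable stdGaussianPDF := by
  rw [stdGaussianPDF_eq]; exact ProbabilityTheory.integrable_gaussianPDFReal 0 1

lemma stdGaussianCDF_strictMono : StrictMono stdGaussianCDF := by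
  intro x y hxy
  have hsplit : stdGaussianCDF y = stdGaussianCDF x + ∫ t in Set.Ioc x y, stdGaussianPDF t := by
    rw [stdGaussianCDF, stdGaussianCDF,
      ← setIntegral_union (Set.Iic_disjoint_Ioc le_rfl) measurableSet_Ioc
        integrable_stdGaussianPDF.integrableOn integrable_stdGaussianPDF.integrableOn,
      Set.Iic_union_Ioc_eq_Iic hxy.le]
  have hpos : 0 < ∫ t in Set.Ioc x y, stdGaussianPDF t := by
    rw [← intervalIntegral.integral_of_le hxy.le]
    exact intervalIntegral.intervalIntegral_pos_of_pos_on
      integrable_stdGaussianPDF.intervalIntegrable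
      (fun t _ => stdGaussianPDF_pos t) hxy
  linarith

lemma modulusE_eq_of_attains {V : Type*} [AddCommGroup V] [Module ℝ V] {n : ℕ}
    (L : V →ₗ[ℝ] ℝ) (m : V →ₗ[ℝ] EuclideanSpace ℝ (Fin n)) (Θ : Set V) (ε : ℝ) (θ : V)
    (hθ : θ ∈ Θ) (hn : ‖m θ‖ ≤ ε) (hatt : ∀ θ' ∈ Θ, ‖m θ'‖ ≤ ε → L θ' ≤ L θ) :
    modulusE L m Θ ε = ((L θ : ℝ) : EReal) := by
  apply le_antisymm
  · apply sSup_le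
    rintro x ⟨θ', ⟨hθ', hn'⟩, rfl⟩
    exact EReal.coe_le_coe_iff.mpr (hatt θ' hθ' hn')
  · exact le_sSup ⟨θ, ⟨hθ, hn⟩, rfl⟩

/-- Key lemma: any attainer of the modulus at `ε*` has `‖m θ‖ = ε*`. -/
lemma key_norm_eq {V : Type*} [AddCommGroup V] [Module ℝ V] {n : ℕ} {σ astar εstar : ℝ}
    (hσ : 0 < σ)
    {L : V →ₗ[ℝ] ℝ} {m : V →ₗ[ℝ] EuclideanSpace ℝ (Fin n)} {Θ : Set V}
    (h0 : (0 : V) ∈ Θ)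
    (hmem : εstar ∈ Set.Icc 0 (astar * σ)) (hne : εstar ≠ 0)
    (hεmax : ∀ ε ∈ Set.Icc 0 (astar * σ),
      modulusE L m Θ ε * ((stdGaussianCDF (-(ε / σ)) : ℝ) : EReal) ≤
        modulusE L m Θ εstar * ((stdGaussianCDF (-(εstar / σ)) : ℝ) : EReal))
    (hεuniq : ∀ ε ∈ Set.Icc 0 (astar * σ),
      (∀ ε' ∈ Set.Icc 0 (astar * σ),
        modulusE L m Θ ε' * ((stdGaussianCDF (-(ε' / σ)) : ℝ) : EReal) ≤
          modulusE L m Θ ε * ((stdGaussianCDF (-(ε / σ)) : ℝ) : EReal)) → ε = εstar)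
    (θ : V) (hθ : θ ∈ Θ) (hn : ‖m θ‖ ≤ εstar)
    (hatt : ∀ θ' ∈ Θ, ‖m θ'‖ ≤ εstar → L θ' ≤ L θ) : ‖m θ‖ = εstar := by
  have hε0 : 0 < εstar := lt_of_le_of_ne hmem.1 (Ne.symm hne)
  have htop : (0:ℝ) ≤ astar * σ := hmem.1.trans hmem.2
  have hmod : modulusE L m Θ εstar = ((L θ : ℝ) : EReal) :=
    modulusE_eq_of_attains L m Θ εstar θ hθ hn hatt
  have hm0 : ‖m (0 : V)‖ = 0 := by simp
  have hL0 : 0 ≤ L θ := by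
    have := hatt 0 h0 (by rw [hm0]; exact hε0.le)
    simpa using this
  have hLpos : 0 < L θ := by
    rcases hL0.lt_or_eq with h | h
    · exact h
    · exfalso
      apply hne
      symm
      apply hεuniq 0 ⟨le_rfl, htop⟩
      intro ε' hε'
      have hmod0 : modulusE L m Θ 0 = ((L (0 : V) : ℝ) : EReal) := by
        apply modulusE_eq_of_attains L m Θ 0 0 h0 (le_of_eq hm0)
        intro θ' hθ' hn'
        have := hatt θ' hθ' (le_trans hn' hε0.le)
        rw [← h] at this
        simpa using this
      calc modulusE L m Θ ε' * ((stdGaussianCDF (-(ε' / σ)) : ℝ) : EReal)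
          ≤ modulusE L m Θ εstar * ((stdGaussianCDF (-(εstar / σ)) : ℝ) : EReal) :=
            hεmax ε' hε'
        _ = 0 := by rw [hmod, ← h]; simp
        _ = modulusE L m Θ 0 * ((stdGaussianCDF (-(0 / σ)) : ℝ) : EReal) := by
            rw [hmod0]; simp
  by_contra hne'
  have hlt : ‖m θ‖ < εstar := lt_of_le_of_ne hn hne'
  set ε' := ‖m θ‖ with hε'def
  have hε'mem : ε' ∈ Set.Icc 0 (astar * σ) :=
    ⟨norm_nonneg _, le_trans hlt.le hmem.2⟩
  have hmod' : modulusE L m Θ ε' = ((L θ : ℝ) : EReal) :=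
    modulusE_eq_of_attains L m Θ ε' θ hθ le_rfl
      (fun θ' hθ' hn' => hatt θ' hθ' (hn'.trans hlt.le))
  have hΦ : stdGaussianCDF (-(εstar / σ)) < stdGaussianCDF (-(ε' / σ)) := by
    apply stdGaussianCDF_strictMono
    have : ε' / σ < εstar / σ := by gcongr
    linarith
  have hineq := hεmax ε' hε'mem
  rw [hmod, hmod', ← EReal.coe_mul, ← EReal.coe_mul, EReal.coe_le_coe_iff] at hineq
  have := mul_lt_mul_of_pos_left hΦ hLpos
  linarith

/-- If `Θ` is convex and centrosymmetric, `ε*` is the unique nonzero maximizer of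
`ε ↦ ω(ε)Φ(−ε/σ)` over `[0, a*σ]`, and `θ₀, θ₁ ∈ Θ` both attain
`sup{L(θ) : ‖m(θ)‖ ≤ ε*, θ ∈ Θ}`, then `‖m(θ₀)‖ = ‖m(θ₁)‖ = ε*` and `m(θ₀) = m(θ₁)`. -/
theorem modulus_maximizer_norm_and_m_unique
    {V : Type*} [AddCommGroup V] [Module ℝ V] (n : ℕ) (σ astar εstar : ℝ) (hσ : 0 < σ)
    (hastar0 : 0 ≤ astar)
    (hamax : ∀ a, 0 ≤ a → a * stdGaussianCDF (-a) ≤ astar * stdGaussianCDF (-astar))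
    (hauniq : ∀ a, 0 ≤ a →
      (∀ b, 0 ≤ b → b * stdGaussianCDF (-b) ≤ a * stdGaussianCDF (-a)) → a = astar)
    (L : V →ₗ[ℝ] ℝ) (m : V →ₗ[ℝ] EuclideanSpace ℝ (Fin n))
    (Θ : Set V) (hconv : Convex ℝ Θ) (hsym : ∀ θ ∈ Θ, -θ ∈ Θ)
    (hmem : εstar ∈ Set.Icc 0 (astar * σ)) (hne : εstar ≠ 0)
    (hεmax : ∀ ε ∈ Set.Icc 0 (astar * σ),
      modulusE L m Θ ε * ((stdGaussianCDF (-(ε / σ)) : ℝ) : EReal) ≤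
        modulusE L m Θ εstar * ((stdGaussianCDF (-(εstar / σ)) : ℝ) : EReal))
    (hεuniq : ∀ ε ∈ Set.Icc 0 (astar * σ),
      (∀ ε' ∈ Set.Icc 0 (astar * σ),
        modulusE L m Θ ε' * ((stdGaussianCDF (-(ε' / σ)) : ℝ) : EReal) ≤
          modulusE L m Θ ε * ((stdGaussianCDF (-(ε / σ)) : ℝ) : EReal)) → ε = εstar)
    (θ₀ θ₁ : V) (hθ₀ : θ₀ ∈ Θ) (hθ₁ : θ₁ ∈ Θ)
    (hn₀ : ‖m θ₀‖ ≤ εstar) (hn₁ : ‖m θ₁‖ ≤ εstar)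
    (hatt₀ : ∀ θ ∈ Θ, ‖m θ‖ ≤ εstar → L θ ≤ L θ₀)
    (hatt₁ : ∀ θ ∈ Θ, ‖m θ‖ ≤ εstar → L θ ≤ L θ₁) :
    ‖m θ₀‖ = εstar ∧ ‖m θ₁‖ = εstar ∧ m θ₀ = m θ₁ := by
  have h0 : (0 : V) ∈ Θ := by
    have := hconv hθ₀ (hsym θ₀ hθ₀) (by norm_num : (0:ℝ) ≤ 1/2)
      (by norm_num : (0:ℝ) ≤ 1/2) (by norm_num)
    simpa using this
  have e₀ : ‖m θ₀‖ = εstar := key_norm_eq hσ h0 hmem hne hεmax hεuniq θ₀ hθ₀ hn₀ hatt₀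
  have e₁ : ‖m θ₁‖ = εstar := key_norm_eq hσ h0 hmem hne hεmax hεuniq θ₁ hθ₁ hn₁ hatt₁
  refine ⟨e₀, e₁, ?_⟩
  by_contra hmne
  have hL01 : L θ₀ = L θ₁ := le_antisymm (hatt₁ θ₀ hθ₀ hn₀) (hatt₀ θ₁ hθ₁ hn₁)
  set θh := (2⁻¹ : ℝ) • (θ₀ + θ₁) with hθhdef
  have hθh : θh ∈ Θ := by
    have := hconv hθ₀ hθ₁ (by norm_num : (0:ℝ) ≤ 1/2) (by norm_num : (0:ℝ) ≤ 1/2) (by norm_num)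
    have heq : (1/2 : ℝ) • θ₀ + (1/2 : ℝ) • θ₁ = θh := by
      rw [hθhdef, smul_add]; norm_num
    rwa [heq] at this
  have hmθh : m θh = (2⁻¹ : ℝ) • (m θ₀ + m θ₁) := by
    rw [hθhdef, m.map_smul, m.map_add]
  have hray : ¬SameRay ℝ (m θ₀) (m θ₁) :=
    (not_sameRay_iff_of_norm_eq (e₀.trans e₁.symm)).mpr hmne
  have hnlt : ‖m θh‖ < εstar := by
    rw [hmθh, norm_smul]
    have := norm_add_lt_of_not_sameRay hray
    rw [e₀, e₁] at this
    simp only [norm_inv, Real.norm_ofNat]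
    nlinarith [norm_nonneg (m θ₀ + m θ₁)]
  have hLθh : L θh = L θ₀ := by
    rw [hθhdef, L.map_smul, L.map_add]
    simp only [smul_eq_mul]
    rw [← hL01]; ring
  have hattθh : ∀ θ' ∈ Θ, ‖m θ'‖ ≤ εstar → L θ' ≤ L θh := by
    intro θ' hθ' hn'
    rw [hLθh]; exact hatt₀ θ' hθ' hn'
  have := key_norm_eq hσ h0 hmem hne hεmax hεuniq θh hθh hnlt.le hattθh
  exact absurd this hnlt.ne
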